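/- In the multilayer setting with widths n_0, …, n_L and layers h = (h_1, …, h_L), the number of attained multi signatures satisfies the Montúfar bound |𝒮_h| ≤ ∏_{l=1}^{L} Σ_{j=0}^{min(n_0, …, n_{l-1})} C(n_l, j). -/

import Mathlib

open Matrix

noncomputable def relu {n n' : ℕ} (W : Matrix (Fin n') (Fin n) ℝ) (b : Fin n' → ℝ)
    (x : Fin n → ℝ) : Fin n' → ℝ :=
  fun i => max 0 (W i ⬝ᵥ x + b i)

noncomputable def sig {n n' : ℕ} (W : Matrix (Fin n') (Fin n) ℝ) (b : Fin n' → ℝ)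
    (x : Fin n → ℝ) : Fin n' → Bool :=
  fun i => decide (0 < W i ⬝ᵥ x + b i)

/-- Forward pass through the first `l` layers: `fwd n W b l = h_l ∘ ⋯ ∘ h_1`. -/
noncomputable def fwd (n : ℕ → ℕ) (W : ∀ l : ℕ, Matrix (Fin (n (l + 1))) (Fin (n l)) ℝ)
    (b : ∀ l : ℕ, Fin (n (l + 1)) → ℝ) : (l : ℕ) → (Fin (n 0) → ℝ) → (Fin (n l) → ℝ)
  | 0 => fun x => x
  | l + 1 => fun x => relu (W l) (b l) (fwd n W b l x)

/-- Multi signature of length `m`: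
`msig n W b m x = (S_{h_1}(x), S_{h_2}(h_1(x)), …, S_{h_m}(h_{m-1}∘⋯∘h_1(x)))`. -/
noncomputable def msig (n : ℕ → ℕ) (W : ∀ l : ℕ, Matrix (Fin (n (l + 1))) (Fin (n l)) ℝ)
    (b : ∀ l : ℕ, Fin (n (l + 1)) → ℝ) (m : ℕ) (x : Fin (n 0) → ℝ) :
    ∀ l : Fin m, Fin (n (l.val + 1)) → Bool :=
  fun l => sig (W l.val) (b l.val) (fwd n W b l.val x)

/-- Number of active units of a binary vector `s`, i.e. `|s|`. -/
def cnt {k : ℕ} (s : Fin k → Bool) : ℕ := (Finset.univ.filter fun j => s j = true).card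

/-- `min(n_0, |s_1|, …, |s_i|)` for a length-`i` multi signature `s`. -/
def minAct (n : ℕ → ℕ) (i : ℕ) (s : ∀ l : Fin i, Fin (n (l.val + 1)) → Bool) : ℕ :=
  Finset.univ.fold min (n 0) (fun l : Fin i => cnt (s l))


/-- `min(n 0, …, n l)`. -/
def minWidth (n : ℕ → ℕ) (l : ℕ) : ℕ := (Finset.range (l + 1)).fold min (n 0) n


open Finset

/-- affine functional x ↦ w ⬝ᵥ x + r -/
noncomputable def affD {m : ℕ} (w : Fin m → ℝ) (r : ℝ) : (Fin m → ℝ) →ᵃ[ℝ] ℝ where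
  toFun := fun x => w ⬝ᵥ x + r
  linear :=
    { toFun := fun x => w ⬝ᵥ x
      map_add' := by intro a c; simp [dotProduct_add]
      map_smul' := by intro a c; simp [dotProduct_smul] }
  map_vadd' := by
    intro p v
    simp [dotProduct_add, vadd_eq_add]
    ring

@[simp] lemma affD_apply {m : ℕ} (w : Fin m → ℝ) (r : ℝ) (x : Fin m → ℝ) :
    affD w r x = w ⬝ᵥ x + r := rfl

@[simp] lemma affD_linear_apply {m : ℕ} (w : Fin m → ℝ) (r : ℝ) (x : Fin m → ℝ) :
    (affD w r).linear x = w ⬝ᵥ x := rfl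

lemma convex_patset {m : ℕ} (w : Fin m → ℝ) (r : ℝ) (u : Bool) :
    Convex ℝ {v : Fin m → ℝ | decide (0 < w ⬝ᵥ v + r) = u} := by
  cases u
  · have h : {v : Fin m → ℝ | decide (0 < w ⬝ᵥ v + r) = false}
        = (affD w r) ⁻¹' (Set.Iic 0) := by
      ext v; simp [not_lt]
    rw [h]
    exact (convex_Iic (0:ℝ)).affine_preimage _
  · have h : {v : Fin m → ℝ | decide (0 < w ⬝ᵥ v + r) = true}
        = (affD w r) ⁻¹' (Set.Ioi 0) := by
      ext v; simp
    rw [h]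
    exact (convex_Ioi (0:ℝ)).affine_preimage _

lemma ivt_zero {m : ℕ} {C : Set (Fin m → ℝ)} (hC : Convex ℝ C) {w : Fin m → ℝ} {r : ℝ}
    {x y : Fin m → ℝ} (hx : x ∈ C) (hy : y ∈ C)
    (hgx : 0 < w ⬝ᵥ x + r) (hgy : w ⬝ᵥ y + r ≤ 0) :
    ∃ z ∈ C, w ⬝ᵥ z + r = 0 := by
  set a := w ⬝ᵥ x + r with ha
  set bb := w ⬝ᵥ y + r with hbb
  have hab : 0 < a - bb := by linarith
  set τ : ℝ := a / (a - bb) with hτ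
  have hτ0 : 0 ≤ τ := div_nonneg hgx.le hab.le
  have hτ1 : τ ≤ 1 := by
    rw [hτ, div_le_one hab]; linarith
  refine ⟨(1 - τ) • x + τ • y, hC hx hy (by linarith) hτ0 (by ring), ?_⟩
  have : w ⬝ᵥ ((1 - τ) • x + τ • y) = (1 - τ) * (w ⬝ᵥ x) + τ * (w ⬝ᵥ y) := by
    simp [dotProduct_add, dotProduct_smul, smul_eq_mul]
  rw [this]
  have hne : a - bb ≠ 0 := ne_of_gt hab
  have : (1 - τ) * (w ⬝ᵥ x) + τ * (w ⬝ᵥ y) + r = (1 - τ) * a + τ * bb := by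
    rw [ha, hbb]; ring
  rw [this, hτ]
  field_simp
  ring

/-- pattern map -/
noncomputable def pat {m N : ℕ} (c : Fin N → Fin m → ℝ) (b : Fin N → ℝ) (x : Fin m → ℝ) :
    Fin N → Bool := fun i => decide (0 < c i ⬝ᵥ x + b i)

lemma pascal_sum (N k : ℕ) :
    ∑ j ∈ range (k+2), (N+1).choose j
      = ∑ j ∈ range (k+2), N.choose j + ∑ j ∈ range (k+1), N.choose j := by
  induction k with
  | zero =>
      simp [Finset.sum_range_succ, Nat.choose]
      omega
  | succ k ih =>
      rw [Finset.sum_range_succ, ih, Finset.sum_range_succ (n := k+2),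
        Finset.sum_range_succ (n := k+1), Nat.choose_succ_succ]
      ring

lemma sum_choose_mono (N : ℕ) {d d' : ℕ} (h : d' ≤ d) :
    ∑ j ∈ range (d'+1), N.choose j ≤ ∑ j ∈ range (d+1), N.choose j :=
  Finset.sum_le_sum_of_subset (by simpa using Nat.succ_le_succ h)

lemma sum_choose_succ_le (k : ℕ) {d : ℕ} (N : ℕ) (hN : N ≤ k) :
    ∑ j ∈ range (d+1), N.choose j ≤ ∑ j ∈ range (d+1), k.choose j :=
  Finset.sum_le_sum (fun j _ => Nat.choose_le_choose j hN)

theorem patterns_le (N : ℕ) : ∀ {m : ℕ} (c : Fin N → Fin m → ℝ) (b : Fin N → ℝ)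
    (A : Set (Fin m → ℝ)), Convex ℝ A → ∀ (d : ℕ),
    Module.finrank ℝ ↥(vectorSpan ℝ A) ≤ d →
    (pat c b '' A).ncard ≤ ∑ j ∈ range (d+1), N.choose j := by
  induction N with
  | zero =>
      intro m c b A hA d hd
      have h1 : (pat c b '' A).ncard ≤ (Set.univ : Set (Fin 0 → Bool)).ncard :=
        Set.ncard_le_ncard (Set.subset_univ _) (Set.toFinite _)
      have h2 : (Set.univ : Set (Fin 0 → Bool)).ncard = 1 := by
        rw [Set.ncard_univ]; simp [Nat.card_eq_fintype_card]
      calc (pat c b '' A).ncard ≤ 1 := h1.trans_eq h2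
        _ ≤ _ := by
            rw [Finset.sum_range_succ']; simp
  | succ N IH =>
      intro m c b A hA d hd
      classical
      set c' : Fin N → Fin m → ℝ := fun i => c i.castSucc with hc'
      set b' : Fin N → ℝ := fun i => b i.castSucc with hb'
      set w : Fin m → ℝ := c (Fin.last N) with hw
      set r : ℝ := b (Fin.last N) with hr
      set pre : (Fin (N+1) → Bool) → (Fin N → Bool) := fun t i => t i.castSucc with hpre
      have hprepat : ∀ x, pre (pat c b x) = pat c' b' x := fun x => rfl
      have hlast : ∀ x, pat c b x (Fin.last N) = decide (0 < w ⬝ᵥ x + r) := fun x => rfl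
      have hext : ∀ t₁ t₂ : Fin (N+1) → Bool, pre t₁ = pre t₂ →
          t₁ (Fin.last N) = t₂ (Fin.last N) → t₁ = t₂ := by
        intro t₁ t₂ h1 h2
        funext i
        rcases Fin.eq_castSucc_or_eq_last i with ⟨j, rfl⟩ | rfl
        · exact congrFun h1 j
        · exact h2
      by_cases hboth : (∃ x ∈ A, 0 < w ⬝ᵥ x + r) ∧ (∃ x ∈ A, w ⬝ᵥ x + r ≤ 0)
      · -- hard case
        obtain ⟨⟨x₀, hx₀A, hx₀⟩, ⟨y₀, hy₀A, hy₀⟩⟩ := hboth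
        set A' : Set (Fin m → ℝ) := A ∩ {v | w ⬝ᵥ v + r = 0} with hA'def
        have hA'conv : Convex ℝ A' := by
          have : {v : Fin m → ℝ | w ⬝ᵥ v + r = 0} = (affD w r) ⁻¹' {0} := rfl
          rw [hA'def, this]
          exact hA.inter ((convex_singleton (0:ℝ)).affine_preimage _)
        obtain ⟨z₀, hz₀A, hz₀⟩ := ivt_zero hA hx₀A hy₀A hx₀ hy₀
        have hz₀A' : z₀ ∈ A' := ⟨hz₀A, hz₀⟩
        -- vectorSpan A' < vectorSpan A
        have hker : vectorSpan ℝ A' ≤ LinearMap.ker (affD w r).linear := by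
          rw [vectorSpan_def, Submodule.span_le]
          rintro v ⟨p, hp, q, hq, rfl⟩
          have hp0 : w ⬝ᵥ p + r = 0 := hp.2
          have hq0 : w ⬝ᵥ q + r = 0 := hq.2
          simp only [SetLike.mem_coe, LinearMap.mem_ker, vsub_eq_sub]
          have : (affD w r).linear (p - q) = w ⬝ᵥ p - w ⬝ᵥ q := by
            simp [dotProduct_sub]
          rw [this]; linarith
        have hmem : x₀ - z₀ ∈ vectorSpan ℝ A := by
          simpa [vsub_eq_sub] using vsub_mem_vectorSpan ℝ hx₀A hz₀A
        have hnmem : x₀ - z₀ ∉ vectorSpan ℝ A' := by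
          intro hmem'
          have := hker hmem'
          rw [LinearMap.mem_ker] at this
          have h2 : (affD w r).linear (x₀ - z₀) = w ⬝ᵥ x₀ - w ⬝ᵥ z₀ := by
            simp [dotProduct_sub]
          rw [h2] at this
          have : w ⬝ᵥ x₀ + r = w ⬝ᵥ z₀ + r := by linarith
          rw [hz₀] at this
          linarith
        have hlt : vectorSpan ℝ A' < vectorSpan ℝ A := by
          refine lt_of_le_of_ne (vectorSpan_mono ℝ Set.inter_subset_left) ?_
          intro he
          exact hnmem (he ▸ hmem)
        have hfr : Module.finrank ℝ ↥(vectorSpan ℝ A') < Module.finrank ℝ ↥(vectorSpan ℝ A) :=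
          Submodule.finrank_lt_finrank_of_lt hlt
        have hd1 : 1 ≤ d := le_trans (Nat.one_le_iff_ne_zero.mpr (by omega)) hd
        obtain ⟨d', rfl⟩ : ∃ d', d = d' + 1 := ⟨d - 1, by omega⟩
        have hdA' : Module.finrank ℝ ↥(vectorSpan ℝ A') ≤ d' := by omega
        -- injection
        set E : Set (Fin N → Bool) := pat c' b' '' A with hE
        set E' : Set (Fin N → Bool) := pat c' b' '' A' with hE'
        set h : (Fin (N+1) → Bool) → (Fin N → Bool) ⊕ (Fin N → Bool) :=
          fun t => if t (Fin.last N) = true ∧ pre t ∈ E' then Sum.inr (pre t)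
            else Sum.inl (pre t) with hh
        -- key: double extension lands in E'
        have hdouble : ∀ x ∈ A, ∀ y ∈ A, pat c' b' x = pat c' b' y →
            0 < w ⬝ᵥ x + r → w ⬝ᵥ y + r ≤ 0 → pat c' b' x ∈ E' := by
          intro x hxA y hyA hpxy hgx hgy
          set u := pat c' b' x with hu
          set C : Set (Fin m → ℝ) :=
            A ∩ ⋂ i : Fin N, {v | decide (0 < c' i ⬝ᵥ v + b' i) = u i} with hC
          have hCconv : Convex ℝ C :=
            hA.inter (convex_iInter fun i => convex_patset (c' i) (b' i) (u i))
          have hxC : x ∈ C := ⟨hxA, Set.mem_iInter.2 fun i => rfl⟩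
          have hyC : y ∈ C := ⟨hyA, Set.mem_iInter.2 fun i => congrFun hpxy.symm i⟩
          obtain ⟨z, hzC, hz0⟩ := ivt_zero hCconv hxC hyC hgx hgy
          refine ⟨z, ⟨hzC.1, hz0⟩, ?_⟩
          funext i
          exact Set.mem_iInter.1 hzC.2 i
        have hmaps : ∀ t ∈ pat c b '' A, h t ∈ (Sum.inl '' E) ∪ (Sum.inr '' E') := by
          rintro t ⟨x, hxA, rfl⟩
          by_cases hcond : pat c b x (Fin.last N) = true ∧ pre (pat c b x) ∈ E'
          · rw [hh]
            simp only [if_pos hcond]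
            exact Or.inr ⟨pre (pat c b x), hcond.2, rfl⟩
          · rw [hh]
            simp only [if_neg hcond]
            exact Or.inl ⟨pre (pat c b x), by rw [hprepat]; exact ⟨x, hxA, rfl⟩, rfl⟩
        have hinj : Set.InjOn h (pat c b '' A) := by
          rintro t₁ ⟨x₁, hx₁A, rfl⟩ t₂ ⟨x₂, hx₂A, rfl⟩ heq
          rw [hh] at heq
          simp only at heq
          by_cases h₁ : pat c b x₁ (Fin.last N) = true ∧ pre (pat c b x₁) ∈ E' <;>
            by_cases h₂ : pat c b x₂ (Fin.last N) = true ∧ pre (pat c b x₂) ∈ E'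
          · rw [if_pos h₁, if_pos h₂] at heq
            have hp : pre (pat c b x₁) = pre (pat c b x₂) := Sum.inr.inj heq
            exact hext _ _ hp (h₁.1.trans h₂.1.symm)
          · rw [if_pos h₁, if_neg h₂] at heq
            exact absurd heq (by simp)
          · rw [if_neg h₁, if_pos h₂] at heq
            exact absurd heq (by simp)
          · rw [if_neg h₁, if_neg h₂] at heq
            have hp : pre (pat c b x₁) = pre (pat c b x₂) := Sum.inl.inj heq
            refine hext _ _ hp ?_
            by_contra hne
            have hbool : ∀ u v : Bool, u ≠ v → (u = true ∧ v = false) ∨ (u = false ∧ v = true) := by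
              decide
            rcases hbool _ _ hne with ⟨hu, hv⟩ | ⟨hu, hv⟩
            · have hgx₁ : 0 < w ⬝ᵥ x₁ + r := by
                have hx := hlast x₁; rw [hu] at hx; exact of_decide_eq_true hx.symm
              have hgx₂ : w ⬝ᵥ x₂ + r ≤ 0 := by
                have hx := hlast x₂; rw [hv] at hx
                exact not_lt.mp (of_decide_eq_false hx.symm)
              have hdd := hdouble x₁ hx₁A x₂ hx₂A
                (by rw [← hprepat, ← hprepat]; exact hp) hgx₁ hgx₂
              exact h₁ ⟨hu, by rw [hprepat]; exact hdd⟩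
            · have hgx₂ : 0 < w ⬝ᵥ x₂ + r := by
                have hx := hlast x₂; rw [hv] at hx; exact of_decide_eq_true hx.symm
              have hgx₁ : w ⬝ᵥ x₁ + r ≤ 0 := by
                have hx := hlast x₁; rw [hu] at hx
                exact not_lt.mp (of_decide_eq_false hx.symm)
              have hdd := hdouble x₂ hx₂A x₁ hx₁A
                (by rw [← hprepat, ← hprepat]; exact hp.symm) hgx₂ hgx₁
              exact h₂ ⟨hv, by rw [hprepat]; exact hdd⟩
        have hcard : (pat c b '' A).ncard ≤ ((Sum.inl '' E) ∪ (Sum.inr '' E') : Set _).ncard :=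
          Set.ncard_le_ncard_of_injOn h hmaps hinj (Set.toFinite _)
        have hsplit : ((Sum.inl '' E) ∪ (Sum.inr '' E') : Set _).ncard ≤ E.ncard + E'.ncard := by
          refine le_trans (Set.ncard_union_le _ _) ?_
          rw [Set.ncard_image_of_injective _ Sum.inl_injective,
            Set.ncard_image_of_injective _ Sum.inr_injective]
        have hEle : E.ncard ≤ ∑ j ∈ range (d' + 2), N.choose j := IH c' b' A hA (d' + 1) hd
        have hE'le : E'.ncard ≤ ∑ j ∈ range (d' + 1), N.choose j := IH c' b' A' hA'conv d' hdA'
        calc (pat c b '' A).ncard ≤ E.ncard + E'.ncard := hcard.trans hsplit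
          _ ≤ ∑ j ∈ range (d' + 2), N.choose j + ∑ j ∈ range (d' + 1), N.choose j :=
              Nat.add_le_add hEle hE'le
          _ = ∑ j ∈ range (d' + 1 + 1), (N + 1).choose j := (pascal_sum N d').symm
      · -- easy case: last bit constant on A
        have hconst : ∀ x ∈ A, ∀ y ∈ A,
            pat c b x (Fin.last N) = pat c b y (Fin.last N) := by
          intro x hx y hy
          rw [hlast, hlast]
          rw [not_and_or] at hboth
          rcases hboth with hnp | hnn
          · push_neg at hnp
            have h1 := hnp x hx
            have h2 := hnp y hy
            simp [not_lt.mpr h1, not_lt.mpr h2]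
          · push_neg at hnn
            have h1 := hnn x hx
            have h2 := hnn y hy
            simp [h1, h2]
        have hinj : Set.InjOn pre (pat c b '' A) := by
          rintro t₁ ⟨x₁, hx₁A, rfl⟩ t₂ ⟨x₂, hx₂A, rfl⟩ heq
          exact hext _ _ heq (hconst x₁ hx₁A x₂ hx₂A)
        have hmaps : ∀ t ∈ pat c b '' A, pre t ∈ pat c' b' '' A := by
          rintro t ⟨x, hxA, rfl⟩
          rw [hprepat]
          exact ⟨x, hxA, rfl⟩
        have hcard : (pat c b '' A).ncard ≤ (pat c' b' '' A).ncard :=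
          Set.ncard_le_ncard_of_injOn pre hmaps hinj (Set.toFinite _)
        calc (pat c b '' A).ncard ≤ (pat c' b' '' A).ncard := hcard
          _ ≤ ∑ j ∈ range (d + 1), N.choose j := IH c' b' A hA d hd
          _ ≤ ∑ j ∈ range (d + 1), (N + 1).choose j := sum_choose_succ_le (N + 1) N (Nat.le_succ N)


section Part2

lemma convex_patset' {E : Type*} [AddCommGroup E] [Module ℝ E] (f : E →ᵃ[ℝ] ℝ) (u : Bool) :
    Convex ℝ {v : E | decide (0 < f v) = u} := by
  cases u
  · have h : {v : E | decide (0 < f v) = false} = f ⁻¹' (Set.Iic 0) := by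
      ext v; simp [not_lt]
    rw [h]; exact (convex_Iic (0:ℝ)).affine_preimage _
  · have h : {v : E | decide (0 < f v) = true} = f ⁻¹' (Set.Ioi 0) := by
      ext v; simp
    rw [h]; exact (convex_Ioi (0:ℝ)).affine_preimage _

lemma vectorSpan_image_le {E F : Type*} [AddCommGroup E] [Module ℝ E] [AddCommGroup F]
    [Module ℝ F] (f : E →ᵃ[ℝ] F) (S : Set E) :
    vectorSpan ℝ (⇑f '' S) ≤ LinearMap.range f.linear := by
  rw [vectorSpan_def, Submodule.span_le]
  rintro v ⟨p, ⟨xp, _, rfl⟩, q, ⟨xq, _, rfl⟩, rfl⟩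
  exact ⟨xp -ᵥ xq, f.linearMap_vsub xp xq⟩

noncomputable def layerAff {m k : ℕ} (M : Matrix (Fin k) (Fin m) ℝ) (v : Fin k → ℝ) :
    (Fin m → ℝ) →ᵃ[ℝ] (Fin k → ℝ) where
  toFun := fun x => M.mulVec x + v
  linear := M.mulVecLin
  map_vadd' := by
    intro p q
    simp only [vadd_eq_add, Matrix.mulVec_add, Matrix.mulVecLin_apply]
    abel

noncomputable def maskL {k : ℕ} (t : Fin k → Bool) : (Fin k → ℝ) →ₗ[ℝ] (Fin k → ℝ) where
  toFun := fun v i => if t i then v i else 0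
  map_add' := by intro a c; funext i; by_cases h : t i <;> simp [h]
  map_smul' := by intro sc a; funext i; by_cases h : t i <;> simp [h]

noncomputable def phi (n : ℕ → ℕ) (W : ∀ l : ℕ, Matrix (Fin (n (l + 1))) (Fin (n l)) ℝ)
    (b : ∀ l : ℕ, Fin (n (l + 1)) → ℝ) (s : ∀ l : ℕ, Fin (n (l + 1)) → Bool) :
    (l : ℕ) → (Fin (n 0) → ℝ) →ᵃ[ℝ] (Fin (n l) → ℝ)
  | 0 => AffineMap.id ℝ _
  | l + 1 => ((maskL (s l)).toAffineMap.comp (layerAff (W l) (b l))).comp (phi n W b s l)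

lemma phi_succ_apply (n : ℕ → ℕ) (W : ∀ l : ℕ, Matrix (Fin (n (l + 1))) (Fin (n l)) ℝ)
    (b : ∀ l : ℕ, Fin (n (l + 1)) → ℝ) (s : ∀ l : ℕ, Fin (n (l + 1)) → Bool)
    (l : ℕ) (x : Fin (n 0) → ℝ) (i : Fin (n (l + 1))) :
    phi n W b s (l + 1) x i
      = if s l i then W l i ⬝ᵥ (phi n W b s l x) + b l i else 0 := rfl

lemma phi_factor (n : ℕ → ℕ) (W : ∀ l : ℕ, Matrix (Fin (n (l + 1))) (Fin (n l)) ℝ)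
    (b : ∀ l : ℕ, Fin (n (l + 1)) → ℝ) (s : ∀ l : ℕ, Fin (n (l + 1)) → Bool)
    (k : ℕ) : ∀ l, k ≤ l →
    ∃ ψ : (Fin (n k) → ℝ) →ᵃ[ℝ] (Fin (n l) → ℝ),
      ∀ x, phi n W b s l x = ψ (phi n W b s k x) := by
  intro l
  induction l with
  | zero =>
      intro hk
      obtain rfl : k = 0 := Nat.le_zero.mp hk
      exact ⟨AffineMap.id ℝ _, fun x => rfl⟩
  | succ l ih =>
      intro hk
      rcases Nat.lt_or_ge k (l + 1) with hlt | hge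
      · obtain ⟨ψ, hψ⟩ := ih (Nat.lt_succ_iff.mp hlt)
        refine ⟨((maskL (s l)).toAffineMap.comp (layerAff (W l) (b l))).comp ψ, fun x => ?_⟩
        show ((maskL (s l)).toAffineMap.comp (layerAff (W l) (b l))) (phi n W b s l x) = _
        rw [hψ x]; rfl
      · obtain rfl : k = l + 1 := le_antisymm hk hge
        exact ⟨AffineMap.id ℝ _, fun x => rfl⟩

end Part2


section Part3

lemma fwd_eq_phi (n : ℕ → ℕ) (W : ∀ l : ℕ, Matrix (Fin (n (l + 1))) (Fin (n l)) ℝ)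
    (b : ∀ l : ℕ, Fin (n (l + 1)) → ℝ) (s : ∀ l : ℕ, Fin (n (l + 1)) → Bool)
    (x : Fin (n 0) → ℝ) (L : ℕ)
    (hcond : ∀ k, k < L → ∀ i, decide (0 < W k i ⬝ᵥ (phi n W b s k x) + b k i) = s k i) :
    ∀ l, l ≤ L → fwd n W b l x = phi n W b s l x := by
  intro l
  induction l with
  | zero => intro _; rfl
  | succ l ih =>
      intro hl
      have hfl := ih (Nat.le_of_succ_le hl)
      funext i
      show max 0 (W l i ⬝ᵥ fwd n W b l x + b l i) = _
      rw [phi_succ_apply, hfl]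
      have hc := hcond l (by omega) i
      by_cases hpos : 0 < W l i ⬝ᵥ phi n W b s l x + b l i
      · rw [if_pos (by rw [← hc]; exact decide_eq_true hpos)]
        exact max_eq_right hpos.le
      · rw [if_neg (by rw [← hc]; simp [hpos])]
        exact max_eq_left (not_lt.mp hpos)

lemma region_eq (n : ℕ → ℕ) (W : ∀ l : ℕ, Matrix (Fin (n (l + 1))) (Fin (n l)) ℝ)
    (b : ∀ l : ℕ, Fin (n (l + 1)) → ℝ) (L : ℕ) (s₀ : ∀ l : Fin L, Fin (n (l.val + 1)) → Bool)
    (s : ∀ l : ℕ, Fin (n (l + 1)) → Bool) (hs : ∀ l : Fin L, s l.val = s₀ l) :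
    {x | msig n W b L x = s₀}
      = {x | ∀ (l : Fin L) (i : Fin (n (l.val + 1))),
          decide (0 < W l.val i ⬝ᵥ phi n W b s l.val x + b l.val i) = s₀ l i} := by
  ext x
  simp only [Set.mem_setOf_eq]
  constructor
  · intro hx
    have key : ∀ k, k < L → ∀ i, decide (0 < W k i ⬝ᵥ phi n W b s k x + b k i) = s k i := by
      intro k
      induction k using Nat.strong_induction_on with
      | _ k ihk =>
          intro hkL i
          have hf : fwd n W b k x = phi n W b s k x :=
            fwd_eq_phi n W b s x k (fun k' hk' => ihk k' hk' (hk'.trans hkL)) k le_rfl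
          rw [← hf]
          have := congrFun (congrFun hx ⟨k, hkL⟩) i
          rw [hs ⟨k, hkL⟩]
          exact this
    intro l i
    rw [← hs l]
    have := key l.val l.isLt i
    simpa using this
  · intro hx
    have hcond : ∀ k, k < L → ∀ i, decide (0 < W k i ⬝ᵥ phi n W b s k x + b k i) = s k i := by
      intro k hk i
      rw [hs ⟨k, hk⟩]
      exact hx ⟨k, hk⟩ i
    funext l
    have hf : fwd n W b l.val x = phi n W b s l.val x :=
      fwd_eq_phi n W b s x L hcond l.val (le_of_lt l.isLt)
    funext i
    show decide (0 < W l.val i ⬝ᵥ fwd n W b l.val x + b l.val i) = s₀ l i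
    rw [hf]
    exact hx l i

lemma fiber_bound (n : ℕ → ℕ) (W : ∀ l : ℕ, Matrix (Fin (n (l + 1))) (Fin (n l)) ℝ)
    (b : ∀ l : ℕ, Fin (n (l + 1)) → ℝ) (L : ℕ) (s₀ : ∀ l : Fin L, Fin (n (l.val + 1)) → Bool) :
    ((fun x => sig (W L) (b L) (fwd n W b L x)) '' {x | msig n W b L x = s₀}).ncard
      ≤ ∑ j ∈ Finset.range (minWidth n L + 1), (n (L + 1)).choose j := by
  classical
  set s : ∀ l : ℕ, Fin (n (l + 1)) → Bool :=
    fun l => if h : l < L then s₀ ⟨l, h⟩ else fun _ => false with hsdef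
  have hsl : ∀ l : Fin L, s l.val = s₀ l := by
    intro l
    simp only [hsdef, dif_pos l.isLt, Fin.eta]
  set R : Set (Fin (n 0) → ℝ) := {x | msig n W b L x = s₀} with hR
  have hreq := region_eq n W b L s₀ s hsl
  have hcondR : ∀ x ∈ R, ∀ k, k < L → ∀ i,
      decide (0 < W k i ⬝ᵥ phi n W b s k x + b k i) = s k i := by
    intro x hx k hk i
    have hx' := (hreq ▸ hx : x ∈ {x | ∀ (l : Fin L) (i : Fin (n (l.val + 1))),
      decide (0 < W l.val i ⬝ᵥ phi n W b s l.val x + b l.val i) = s₀ l i})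
    rw [show s k = s₀ ⟨k, hk⟩ from hsl ⟨k, hk⟩]
    exact hx' ⟨k, hk⟩ i
  have himg : (fun x => sig (W L) (b L) (fwd n W b L x)) '' R
      = pat (fun i => W L i) (b L) '' ((phi n W b s L) '' R) := by
    rw [← Set.image_comp]
    apply Set.image_congr
    intro x hx
    have hf := fwd_eq_phi n W b s x L (hcondR x hx) L le_rfl
    show sig (W L) (b L) (fwd n W b L x) = pat (fun i => W L i) (b L) (phi n W b s L x)
    rw [hf]
    rfl
  rw [himg]
  have hRconv : Convex ℝ R := by
    rw [hR, hreq]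
    have heq : {x | ∀ (l : Fin L) (i : Fin (n (l.val + 1))),
        decide (0 < W l.val i ⬝ᵥ phi n W b s l.val x + b l.val i) = s₀ l i}
        = ⋂ (l : Fin L), ⋂ (i : Fin (n (l.val + 1))),
          {x | decide (0 < ((affD (W l.val i) (b l.val i)).comp (phi n W b s l.val)) x)
            = s₀ l i} := by
      ext x
      simp only [Set.mem_iInter, Set.mem_setOf_eq]
      rfl
    rw [heq]
    exact convex_iInter fun l => convex_iInter fun i => convex_patset' _ _
  have hAconv : Convex ℝ ((phi n W b s L) '' R) := hRconv.affine_image _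
  have hrank : Module.finrank ℝ ↥(vectorSpan ℝ ((phi n W b s L) '' R)) ≤ minWidth n L := by
    have hk : ∀ k, k ≤ L → Module.finrank ℝ ↥(vectorSpan ℝ ((phi n W b s L) '' R)) ≤ n k := by
      intro k hkL
      obtain ⟨ψ, hψ⟩ := phi_factor n W b s k L hkL
      have h1 : (phi n W b s L) '' R ⊆ ⇑ψ '' ((phi n W b s k) '' R) := by
        rintro a ⟨x, hx, rfl⟩
        exact ⟨phi n W b s k x, ⟨x, hx, rfl⟩, (hψ x).symm⟩
      have h2 : vectorSpan ℝ ((phi n W b s L) '' R) ≤ LinearMap.range ψ.linear :=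
        le_trans (vectorSpan_mono ℝ h1) (vectorSpan_image_le ψ _)
      calc Module.finrank ℝ ↥(vectorSpan ℝ ((phi n W b s L) '' R))
          ≤ Module.finrank ℝ ↥(LinearMap.range ψ.linear) := Submodule.finrank_mono h2
        _ ≤ Module.finrank ℝ (Fin (n k) → ℝ) := LinearMap.finrank_range_le _
        _ = n k := by simp [Module.finrank_pi]
    unfold minWidth
    exact (Finset.le_fold_min _).mpr
      ⟨hk 0 (Nat.zero_le _), fun k hk' =>
        hk k (by simpa [Nat.lt_succ_iff] using Finset.mem_range.mp hk')⟩
  exact patterns_le (n (L + 1)) (fun i => W L i) (b L) _ hAconv (minWidth n L) hrank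

lemma main_aux (n : ℕ → ℕ) (W : ∀ l : ℕ, Matrix (Fin (n (l + 1))) (Fin (n l)) ℝ)
    (b : ∀ l : ℕ, Fin (n (l + 1)) → ℝ) :
    ∀ L : ℕ, (Set.range (msig n W b L)).ncard
      ≤ ∏ l ∈ Finset.range L, ∑ j ∈ Finset.range (minWidth n l + 1), (n (l + 1)).choose j := by
  intro L
  induction L with
  | zero =>
      have h1 : (Set.range (msig n W b 0)).ncard ≤ (Set.univ : Set (∀ l : Fin 0, Fin (n (l.val + 1)) → Bool)).ncard :=
        Set.ncard_le_ncard (Set.subset_univ _) (Set.toFinite _)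
      simpa [Set.ncard_univ] using h1
  | succ L IH =>
      classical
      set B : ℕ := ∑ j ∈ Finset.range (minWidth n L + 1), (n (L + 1)).choose j with hB
      set P : Finset (∀ l : Fin (L + 1), Fin (n (l.val + 1)) → Bool) :=
        (Set.range (msig n W b (L + 1))).toFinset with hP
      set ρ : (∀ l : Fin (L + 1), Fin (n (l.val + 1)) → Bool) →
          (∀ l : Fin L, Fin (n (l.val + 1)) → Bool) := fun t l => t l.castSucc with hρ
      have hρmsig : ∀ x, ρ (msig n W b (L + 1) x) = msig n W b L x := fun x => rfl
      have hext : ∀ t₁ t₂ : ∀ l : Fin (L + 1), Fin (n (l.val + 1)) → Bool,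
          ρ t₁ = ρ t₂ → t₁ (Fin.last L) = t₂ (Fin.last L) → t₁ = t₂ := by
        intro t₁ t₂ h1 h2
        funext l
        rcases Fin.eq_castSucc_or_eq_last l with ⟨j, rfl⟩ | rfl
        · exact congrFun h1 j
        · exact h2
      have hfib : ∀ s ∈ P.image ρ, (P.filter (fun t => ρ t = s)).card ≤ B := by
        intro s _
        have hmaps : ∀ t ∈ P.filter (fun t => ρ t = s),
            t (Fin.last L) ∈ ((fun x => sig (W L) (b L) (fwd n W b L x)) ''
              {x | msig n W b L x = s}).toFinset := by
          intro t ht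
          rw [Finset.mem_filter] at ht
          obtain ⟨htP, htρ⟩ := ht
          rw [hP, Set.mem_toFinset] at htP
          obtain ⟨x, rfl⟩ := htP
          rw [Set.mem_toFinset]
          exact ⟨x, by rw [← htρ]; exact (hρmsig x).symm ▸ rfl, rfl⟩
        have hinj : Set.InjOn (fun t : ∀ l : Fin (L + 1), Fin (n (l.val + 1)) → Bool =>
            t (Fin.last L)) ↑(P.filter (fun t => ρ t = s)) := by
          intro t₁ ht₁ t₂ ht₂ heq
          simp only [Finset.coe_filter, Set.mem_setOf_eq] at ht₁ ht₂
          exact hext t₁ t₂ (ht₁.2.trans ht₂.2.symm) heq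
        calc (P.filter (fun t => ρ t = s)).card
            ≤ ((fun x => sig (W L) (b L) (fwd n W b L x)) ''
              {x | msig n W b L x = s}).toFinset.card :=
              Finset.card_le_card_of_injOn _ hmaps hinj
          _ = ((fun x => sig (W L) (b L) (fwd n W b L x)) ''
              {x | msig n W b L x = s}).ncard := by
              rw [Set.ncard_eq_toFinset_card']
          _ ≤ B := fiber_bound n W b L s
      have hPcard : P.card ≤ B * (P.image ρ).card := Finset.card_le_mul_card_image P B hfib
      have himgρ : P.image ρ = (Set.range (msig n W b L)).toFinset := by
        ext s
        simp only [Finset.mem_image, hP, Set.mem_toFinset, Set.mem_range]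
        constructor
        · rintro ⟨t, ⟨x, rfl⟩, rfl⟩
          exact ⟨x, (hρmsig x).symm⟩
        · rintro ⟨x, rfl⟩
          exact ⟨msig n W b (L + 1) x, ⟨x, rfl⟩, hρmsig x⟩
      calc (Set.range (msig n W b (L + 1))).ncard = P.card := Set.ncard_eq_toFinset_card' _
        _ ≤ B * (P.image ρ).card := hPcard
        _ = B * (Set.range (msig n W b L)).ncard := by
            rw [himgρ, ← Set.ncard_eq_toFinset_card']
        _ ≤ B * ∏ l ∈ Finset.range L, ∑ j ∈ Finset.range (minWidth n l + 1), (n (l + 1)).choose j :=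
            Nat.mul_le_mul_left B IH
        _ = ∏ l ∈ Finset.range (L + 1), ∑ j ∈ Finset.range (minWidth n l + 1), (n (l + 1)).choose j := by
            rw [Finset.prod_range_succ]
            ring

end Part3


/-- Montúfar's bound: in the multilayer setting with widths `n 0, …, n L` and layers
`h = (h_1, …, h_L)`, the number of attained multi signatures satisfies
`|𝒮_h| ≤ ∏_{l=1}^{L} ∑_{j=0}^{min(n_0, …, n_{l-1})} C(n_l, j)`. -/
theorem stmt10 (L : ℕ) (hL : 0 < L) (n : ℕ → ℕ) (hn : ∀ l, 0 < n l)
    (W : ∀ l : ℕ, Matrix (Fin (n (l + 1))) (Fin (n l)) ℝ)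
    (b : ∀ l : ℕ, Fin (n (l + 1)) → ℝ) :
    (Set.range (msig n W b L)).ncard ≤
      ∏ l ∈ Finset.range L,
        ∑ j ∈ Finset.range (minWidth n l + 1), (n (l + 1)).choose j := by
  exact main_aux n W b L
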